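/- Let U: (0,∞) → ℝ be strictly concave and differentiable, and let λ_t > 0 for t = 0,…,T. Suppose (θ̄, c̄) with c̄_t > 0 satisfies the wealth equation θ̄_t(S_t + δ_t) = θ̄_{t+1}S_t + c̄_t (with S_T = θ̄_{T+1} = 0, θ̄₀ = y), together with the first-order condition λ_t S_t = E[λ_{t+1}(S_{t+1} + δ_{t+1}) | 𝒢_t] where λ_t = U'(c̄_t) and θ̄ is 𝒢-previsible. Then for any other 𝒢-previsible θ with θ₀ = y and associated consumption c_t = θ_t(S_t + δ_t) - θ_{t+1}S_t > 0, one has E[Σ_{t=0}^T U(c_t)] ≤ E[Σ_{t=0}^T U(c̄_t)]. -/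

import Mathlib

open MeasureTheory Finset


/-- Tangent line inequality for a concave differentiable function on `(0, ∞)`. -/
lemma tangent_line_le' {U U' : ℝ → ℝ} (hU : StrictConcaveOn ℝ (Set.Ioi 0) U)
    (hU' : ∀ x ∈ Set.Ioi (0:ℝ), HasDerivAt U (U' x) x)
    {a b : ℝ} (ha : 0 < a) (hb : 0 < b) :
    U b - U a ≤ U' a * (b - a) := by
  rcases lt_trichotomy a b with h | h | h
  · have hs := hU.concaveOn.slope_le_of_hasDerivAt (Set.mem_Ioi.2 ha) (Set.mem_Ioi.2 hb) h
      (hU' a (Set.mem_Ioi.2 ha))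
    rw [slope_def_field, div_le_iff₀ (sub_pos.2 h)] at hs
    linarith [hs]
  · simp [h]
  · have hs := hU.concaveOn.le_slope_of_hasDerivAt (Set.mem_Ioi.2 hb) (Set.mem_Ioi.2 ha) h
      (hU' a (Set.mem_Ioi.2 ha))
    rw [slope_def_field, le_div_iff₀ (sub_pos.2 h)] at hs
    nlinarith [hs]

/-- Key conditional-expectation step: if `Z ≤ G + Γ·(X - M)` with `G, Γ, M` being
`m`-measurable and `M = E[X | m]`, then `E[Z | m] ≤ G` a.e. -/
lemma condexp_le_of_le_add_mul {Ω : Type*} {m mΩ : MeasurableSpace Ω} {μ : Measure Ω}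
    [IsProbabilityMeasure μ] (hm : m ≤ mΩ)
    {Z G Γ X M : Ω → ℝ}
    (hZ : Integrable Z μ) (hX : Integrable X μ) (hM : Integrable M μ)
    (hG : StronglyMeasurable[m] G) (hΓ : StronglyMeasurable[m] Γ)
    (hMm : StronglyMeasurable[m] M)
    (hcond : μ[X|m] =ᵐ[μ] M)
    (hle : Z ≤ᵐ[μ] fun ω => G ω + Γ ω * (X ω - M ω)) :
    μ[Z|m] ≤ᵐ[μ] G := by
  set s : ℕ → Set Ω := fun n => G ⁻¹' Set.Icc (-(n:ℝ)) n ∩ Γ ⁻¹' Set.Icc (-(n:ℝ)) n with hs_def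
  have hs_m : ∀ n, MeasurableSet[m] (s n) := fun n =>
    (hG.measurable measurableSet_Icc).inter (hΓ.measurable measurableSet_Icc)
  have hs_m0 : ∀ n, MeasurableSet[mΩ] (s n) := fun n => hm _ (hs_m n)
  have hkey : ∀ n : ℕ, (s n).indicator (μ[Z|m]) ≤ᵐ[μ] (s n).indicator G := by
    intro n
    set gn : Ω → ℝ := (s n).indicator Γ with hgn_def
    have hgn_m : StronglyMeasurable[m] gn := hΓ.indicator (hs_m n)
    have hgn_bdd : ∀ ω, ‖gn ω‖ ≤ n := by
      intro ω
      by_cases hω : ω ∈ s n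
      · rw [hgn_def, Set.indicator_of_mem hω]
        rcases hω with ⟨_, hΓω⟩
        rw [Real.norm_eq_abs, abs_le]
        exact ⟨hΓω.1, hΓω.2⟩
      · rw [hgn_def, Set.indicator_of_notMem hω]
        simp
    set F1 : Ω → ℝ := (s n).indicator G with hF1_def
    have hF1_m : StronglyMeasurable[m] F1 := hG.indicator (hs_m n)
    have hF1_int : Integrable F1 μ := by
      refine Integrable.mono' (integrable_const (n : ℝ)) (hF1_m.mono hm).aestronglyMeasurable ?_
      refine Filter.Eventually.of_forall fun ω => ?_
      by_cases hω : ω ∈ s n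
      · rw [hF1_def, Set.indicator_of_mem hω]
        rcases hω with ⟨hGω, _⟩
        rw [Real.norm_eq_abs, abs_le]
        exact ⟨hGω.1, hGω.2⟩
      · rw [hF1_def, Set.indicator_of_notMem hω]; simp
    have hF2_int : Integrable (gn * X) μ :=
      hX.bdd_mul (hgn_m.mono hm).aestronglyMeasurable (Filter.Eventually.of_forall hgn_bdd)
    have hF3_int : Integrable (gn * M) μ :=
      hM.bdd_mul (hgn_m.mono hm).aestronglyMeasurable (Filter.Eventually.of_forall hgn_bdd)
    -- decomposition of the indicator of the RHS
    have hdecomp : (s n).indicator (fun ω => G ω + Γ ω * (X ω - M ω))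
        = F1 + (gn * X - gn * M) := by
      funext ω
      by_cases hω : ω ∈ s n
      · simp only [Set.indicator_of_mem hω, hF1_def, hgn_def, Pi.add_apply, Pi.sub_apply,
          Pi.mul_apply]
        ring
      · simp only [Set.indicator_of_notMem hω, hF1_def, hgn_def, Pi.add_apply, Pi.sub_apply,
          Pi.mul_apply]
        ring
    have hRHS_int : Integrable ((s n).indicator (fun ω => G ω + Γ ω * (X ω - M ω))) μ := by
      rw [hdecomp]; exact hF1_int.add (hF2_int.sub hF3_int)
    -- condexp of the RHS
    have hcond_rhs : μ[(s n).indicator (fun ω => G ω + Γ ω * (X ω - M ω))|m] =ᵐ[μ] F1 := by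
      rw [hdecomp]
      have h1 := condExp_add (μ := μ) (m := m) hF1_int (hF2_int.sub hF3_int)
      have h2 := condExp_sub (μ := μ) (m := m) hF2_int hF3_int
      have h3 : μ[F1|m] = F1 := condExp_of_stronglyMeasurable hm hF1_m hF1_int
      have h4 : μ[gn * X|m] =ᵐ[μ] gn * M :=
        (condExp_mul_of_stronglyMeasurable_left hgn_m hF2_int hX).trans
          ((Filter.EventuallyEq.refl _ gn).mul hcond)
      have h5 : μ[gn * M|m] = gn * M :=
        condExp_of_stronglyMeasurable hm (hgn_m.mul hMm) hF3_int
      filter_upwards [h1, h2, h4] with ω hω1 hω2 hω4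
      rw [hω1]
      simp only [Pi.add_apply, Pi.sub_apply] at hω2 ⊢
      rw [hω2, h3, h5, hω4]
      simp only [Pi.mul_apply]
      ring
    -- monotonicity
    have hmono : μ[(s n).indicator Z|m]
        ≤ᵐ[μ] μ[(s n).indicator (fun ω => G ω + Γ ω * (X ω - M ω))|m] := by
      refine condExp_mono (hZ.indicator (hs_m0 n)) hRHS_int ?_
      filter_upwards [hle] with ω hω
      by_cases hmem : ω ∈ s n
      · rw [Set.indicator_of_mem hmem, Set.indicator_of_mem hmem]; exact hω
      · rw [Set.indicator_of_notMem hmem, Set.indicator_of_notMem hmem]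
    have hind := condExp_indicator (μ := μ) (m := m) hZ (hs_m n)
    filter_upwards [hmono, hcond_rhs, hind] with ω hω1 hω2 hω3
    rw [← hω3]
    calc (μ[(s n).indicator Z|m]) ω ≤ _ := hω1
    _ = F1 ω := hω2
  have hall : ∀ᵐ ω ∂μ, ∀ n : ℕ, (s n).indicator (μ[Z|m]) ω ≤ (s n).indicator G ω :=
    ae_all_iff.2 hkey
  filter_upwards [hall] with ω hω
  obtain ⟨n, hn⟩ : ∃ n : ℕ, |G ω| ≤ n ∧ |Γ ω| ≤ n := by
    refine ⟨⌈max |G ω| |Γ ω|⌉₊, ?_, ?_⟩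
    · exact (le_max_left _ _).trans (Nat.le_ceil _)
    · exact (le_max_right _ _).trans (Nat.le_ceil _)
  have hmem : ω ∈ s n := by
    constructor
    · exact Set.mem_preimage.2 (Set.mem_Icc.2 (abs_le.1 hn.1))
    · exact Set.mem_preimage.2 (Set.mem_Icc.2 (abs_le.1 hn.2))
  have := hω n
  rwa [Set.indicator_of_mem hmem, Set.indicator_of_mem hmem] at this

/-- Verification of optimality (step (vi) of the proof of Theorem 2.1): if the
candidate plan `(θ̄, c̄)` satisfies the wealth equation and the first-order
(martingale) condition `λ_t S_t = E[λ_{t+1}(S_{t+1} + δ_{t+1}) | 𝒢_t]` with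
`λ_t = U'(c̄_t) > 0`, then `(θ̄, c̄)` dominates any other previsible
self-financing plan `(θ, c)` with the same initial holding `y` for the
objective `E[Σ_{t=0}^T U(c_t)]`. -/
theorem discrete_time_optimality
    {Ω : Type*} {mΩ : MeasurableSpace Ω} {μ : Measure Ω} [IsProbabilityMeasure μ]
    (T : ℕ) (𝒢 : Filtration ℕ mΩ)
    (S δ : ℕ → Ω → ℝ) (hSad : Adapted 𝒢 S) (hδad : Adapted 𝒢 δ)
    (hδpos : ∀ t ω, 0 < δ t ω) (hST : ∀ ω, S T ω = 0)
    (U U' : ℝ → ℝ) (hU : StrictConcaveOn ℝ (Set.Ioi 0) U)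
    (hU' : ∀ x ∈ Set.Ioi (0:ℝ), HasDerivAt U (U' x) x)
    (y : ℝ)
    -- the candidate optimal plan
    (θbar cbar : ℕ → Ω → ℝ) (hcbarpos : ∀ t ω, 0 < cbar t ω)
    (hθbarprev : ∀ t, StronglyMeasurable[𝒢 t] (θbar (t+1)))
    (hθbar0 : ∀ ω, θbar 0 ω = y) (hθbarT : ∀ ω, θbar (T+1) ω = 0)
    (hwealthbar : ∀ t ≤ T, ∀ ω,
      θbar t ω * (S t ω + δ t ω) = θbar (t+1) ω * S t ω + cbar t ω)
    -- λ_t = U'(c̄_t) > 0 and the first-order condition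
    (lam : ℕ → Ω → ℝ) (hlam : ∀ t ω, lam t ω = U' (cbar t ω))
    (hlampos : ∀ t ω, 0 < lam t ω)
    (hFOC : ∀ t < T,
      (fun ω => lam t ω * S t ω)
        =ᵐ[μ] μ[fun ω => lam (t+1) ω * (S (t+1) ω + δ (t+1) ω) | 𝒢 t])
    -- an arbitrary competing previsible self-financing plan
    (θ c : ℕ → Ω → ℝ)
    (hθprev : ∀ t, StronglyMeasurable[𝒢 t] (θ (t+1)))
    (hθ0 : ∀ ω, θ 0 ω = y) (hθT : ∀ ω, θ (T+1) ω = 0)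
    (hc : ∀ t ≤ T, ∀ ω, c t ω = θ t ω * (S t ω + δ t ω) - θ (t+1) ω * S t ω)
    (hcpos : ∀ t ω, 0 < c t ω)
    -- integrability so that the objectives are well defined
    (hintc : ∀ t, Integrable (fun ω => U (c t ω)) μ)
    (hintcbar : ∀ t, Integrable (fun ω => U (cbar t ω)) μ)
    (hintprod : ∀ t, Integrable (fun ω => lam t ω * (S t ω + δ t ω)) μ) :
    (∫ ω, ∑ t ∈ Finset.range (T+1), U (c t ω) ∂μ)
      ≤ ∫ ω, ∑ t ∈ Finset.range (T+1), U (cbar t ω) ∂μ := by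
  classical
  -- abbreviations
  set Δ : ℕ → Ω → ℝ := fun t ω => θ t ω - θbar t ω with hΔdef
  set X : ℕ → Ω → ℝ := fun t ω => lam t ω * (S t ω + δ t ω) with hXdef
  set M : ℕ → Ω → ℝ := fun t ω => lam t ω * S t ω with hMdef
  set P : ℕ → Ω → ℝ := fun k ω => ∑ s ∈ range k, Δ (s+1) ω * (X (s+1) ω - M s ω) with hPdef
  set Y : Ω → ℝ := fun ω => ∑ t ∈ range (T+1), (U (c t ω) - U (cbar t ω)) with hYdef
  -- measurability facts
  have hlam_eq : ∀ t, lam t = fun ω => deriv U (cbar t ω) := by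
    intro t; funext ω
    rw [hlam]
    exact ((hU' _ (hcbarpos t ω)).deriv).symm
  have hθbar_meas : ∀ t ≤ T + 1, StronglyMeasurable[𝒢 t] (θbar t) := by
    intro t _
    cases t with
    | zero =>
        have : θbar 0 = fun _ => y := funext hθbar0
        rw [this]; exact stronglyMeasurable_const
    | succ s => exact (hθbarprev s).mono (𝒢.mono (Nat.le_succ s))
  have hθ_meas : ∀ t ≤ T + 1, StronglyMeasurable[𝒢 t] (θ t) := by
    intro t _
    cases t with
    | zero =>
        have : θ 0 = fun _ => y := funext hθ0
        rw [this]; exact stronglyMeasurable_const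
    | succ s => exact (hθprev s).mono (𝒢.mono (Nat.le_succ s))
  have hcbar_meas : ∀ t ≤ T, StronglyMeasurable[𝒢 t] (cbar t) := by
    intro t ht
    have hfun : cbar t = fun ω => θbar t ω * (S t ω + δ t ω) - θbar (t+1) ω * S t ω := by
      funext ω
      have := hwealthbar t ht ω
      linarith
    rw [hfun]
    exact ((hθbar_meas t (ht.trans (Nat.le_succ T))).mul ((hSad t).stronglyMeasurable.add (hδad t).stronglyMeasurable)).sub
      ((hθbarprev t).mul (hSad t).stronglyMeasurable)
  have hlam_meas : ∀ t ≤ T, StronglyMeasurable[𝒢 t] (lam t) := by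
    intro t ht
    rw [hlam_eq]
    exact ((measurable_deriv U).comp (hcbar_meas t ht).measurable).stronglyMeasurable
  have hX_meas : ∀ t ≤ T, StronglyMeasurable[𝒢 t] (X t) := fun t ht =>
    (hlam_meas t ht).mul ((hSad t).stronglyMeasurable.add (hδad t).stronglyMeasurable)
  have hM_meas : ∀ t ≤ T, StronglyMeasurable[𝒢 t] (M t) := fun t ht =>
    (hlam_meas t ht).mul (hSad t).stronglyMeasurable
  have hΔ_meas : ∀ s, StronglyMeasurable[𝒢 s] (Δ (s+1)) := fun s =>
    (hθprev s).sub (hθbarprev s)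
  have hP_meas : ∀ k ≤ T, StronglyMeasurable[𝒢 k] (P k) := by
    intro k hk
    apply Finset.stronglyMeasurable_fun_sum
    intro s hs
    rw [mem_range] at hs
    have h1 : StronglyMeasurable[𝒢 k] (Δ (s+1)) := (hΔ_meas s).mono (𝒢.mono hs.le)
    have h2 : StronglyMeasurable[𝒢 k] (X (s+1)) :=
      (hX_meas (s+1) (Nat.succ_le_of_lt (hs.trans_le hk))).mono (𝒢.mono hs)
    have h3 : StronglyMeasurable[𝒢 k] (M s) :=
      (hM_meas s ((hs.le.trans hk))).mono (𝒢.mono hs.le)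
    exact h1.mul (h2.sub h3)
  have hMint : ∀ k, k < T → Integrable (M k) μ := fun k hk =>
    integrable_condExp.congr (hFOC k hk).symm
  -- the pointwise tangent-line + summation-by-parts inequality
  have key : ∀ ω, Y ω ≤ P T ω := by
    intro ω
    have h1 : ∀ t ∈ range (T+1), U (c t ω) - U (cbar t ω) ≤ lam t ω * (c t ω - cbar t ω) := by
      intro t _
      rw [hlam]
      exact tangent_line_le' hU hU' (hcbarpos t ω) (hcpos t ω)
    have h2 : Y ω ≤ ∑ t ∈ range (T+1), lam t ω * (c t ω - cbar t ω) := Finset.sum_le_sum h1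
    refine h2.trans (le_of_eq ?_)
    have hdiff : ∀ t ∈ range (T+1), lam t ω * (c t ω - cbar t ω)
        = Δ t ω * X t ω - lam t ω * Δ (t+1) ω * S t ω := by
      intro t ht
      rw [mem_range, Nat.lt_succ_iff] at ht
      have h3 := hc t ht ω
      have h4 := hwealthbar t ht ω
      have h5 : c t ω - cbar t ω
          = (θ t ω - θbar t ω) * (S t ω + δ t ω) - (θ (t+1) ω - θbar (t+1) ω) * S t ω := by
        have h4' : cbar t ω = θbar t ω * (S t ω + δ t ω) - θbar (t+1) ω * S t ω := by
          linarith
        rw [h3, h4']; ring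
      rw [h5]
      simp only [hΔdef, hXdef]
      ring
    rw [Finset.sum_congr rfl hdiff, Finset.sum_sub_distrib,
      Finset.sum_range_succ' (fun t => Δ t ω * X t ω) T,
      Finset.sum_range_succ (fun t => lam t ω * Δ (t+1) ω * S t ω) T]
    have hΔ0 : Δ 0 ω = 0 := by simp [hΔdef, hθ0 ω, hθbar0 ω]
    rw [hΔ0, hST ω]
    simp only [zero_mul, mul_zero, add_zero]
    rw [← Finset.sum_sub_distrib]
    refine Finset.sum_congr rfl fun i _ => ?_
    simp only [hMdef]
    ring
  have hYint : Integrable Y μ := by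
    apply integrable_finset_sum
    intro t _
    exact (hintc t).sub (hintcbar t)
  -- backward induction
  have main : ∀ n, n ≤ T → ∃ Z : Ω → ℝ, Integrable Z μ ∧ (Z ≤ᵐ[μ] P (T - n)) ∧
      ∫ ω, Y ω ∂μ ≤ ∫ ω, Z ω ∂μ := by
    intro n
    induction n with
    | zero =>
        intro _
        exact ⟨Y, hYint, Filter.Eventually.of_forall (by simpa using key), le_refl _⟩
    | succ n ih =>
        intro hn
        obtain ⟨Z, hZint, hZle, hZY⟩ := ih (Nat.le_of_succ_le hn)
        set k := T - (n+1) with hk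
        have hkT : k < T := by omega
        have hsucc : T - n = k + 1 := by omega
        rw [hsucc] at hZle
        have hle' : Z ≤ᵐ[μ] fun ω => P k ω + Δ (k+1) ω * (X (k+1) ω - M k ω) := by
          refine hZle.mono fun ω hω => ?_
          exact hω.trans_eq
            (Finset.sum_range_succ (fun s => Δ (s+1) ω * (X (s+1) ω - M s ω)) k)
        have hcond : μ[X (k+1)|𝒢 k] =ᵐ[μ] M k := (hFOC k hkT).symm
        have hmain := condexp_le_of_le_add_mul (𝒢.le k) hZint (hintprod (k+1)) (hMint k hkT)
          (hP_meas k hkT.le) (hΔ_meas k) (hM_meas k hkT.le) hcond hle'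
        refine ⟨μ[Z|𝒢 k], integrable_condExp, hmain, ?_⟩
        rw [integral_condExp (𝒢.le k)]
        exact hZY
  obtain ⟨Z, hZint, hZle, hZY⟩ := main T le_rfl
  have hP0 : P (T - T) = fun _ => (0:ℝ) := by
    funext ω
    simp [hPdef, Nat.sub_self]
  rw [hP0] at hZle
  have hY0 : ∫ ω, Y ω ∂μ ≤ 0 := hZY.trans (integral_nonpos_of_ae hZle)
  have hYeq : ∫ ω, Y ω ∂μ
      = (∫ ω, ∑ t ∈ range (T+1), U (c t ω) ∂μ)
        - ∫ ω, ∑ t ∈ range (T+1), U (cbar t ω) ∂μ := by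
    rw [hYdef]
    rw [show (fun ω => ∑ t ∈ range (T+1), (U (c t ω) - U (cbar t ω)))
        = fun ω => (∑ t ∈ range (T+1), U (c t ω)) - ∑ t ∈ range (T+1), U (cbar t ω) by
      funext ω; rw [Finset.sum_sub_distrib]]
    exact integral_sub (integrable_finset_sum _ fun t _ => hintc t)
      (integrable_finset_sum _ fun t _ => hintcbar t)
  linarith
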